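/- Let q be a prime power, m ≥ 0, and α a composition of n. Then the power series C_{α,m}(t) ∈ ℤ[[t]] is a monic polynomial of degree n(q^m−1): its coefficient of t^{n(q^m−1)} equals 1, and its coefficient of t^d equals 0 for every d > n(q^m−1). -/

import Mathlib

open Finset PowerSeries

/-- Partial sums: `psum f i = f 0 + f 1 + ⋯ + f (i-1)`. -/
def psum (f : ℕ → ℕ) (i : ℕ) : ℕ := ∑ j ∈ Finset.range i, f j

lemma psum_succ (f : ℕ → ℕ) (i : ℕ) : psum f (i + 1) = psum f i + f i := by
  simp [psum, Finset.sum_range_succ]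

lemma psum_mono (f : ℕ → ℕ) {i j : ℕ} (h : i ≤ j) : psum f i ≤ psum f j := by
  unfold psum
  exact Finset.sum_le_sum_of_subset (Finset.range_subset_range.mpr h)

lemma sum_min_le (β : ℕ → ℕ) (ℓ k0 : ℕ) :
    ∑ i ∈ Finset.range ℓ, min (β i) (psum β (i + 1) - k0) ≤ psum β ℓ - k0 := by
  induction ℓ with
  | zero => simp [psum]
  | succ L ih =>
      rw [Finset.sum_range_succ, psum_succ]
      have h := psum_succ β L
      omega

lemma nat_div_add_le (a b d : ℕ) : a / d + b / d ≤ (a + b) / d := by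
  rcases Nat.eq_zero_or_pos d with h | h
  · simp [h]
  · rw [Nat.le_div_iff_mul_le h, Nat.add_mul]
    exact Nat.add_le_add (Nat.div_mul_le_self a d) (Nat.div_mul_le_self b d)

lemma sum_div_le {ι : Type*} (s : Finset ι) (f : ι → ℕ) (d : ℕ) :
    ∑ i ∈ s, f i / d ≤ (∑ i ∈ s, f i) / d := by
  classical
  induction s using Finset.cons_induction with
  | empty => simp
  | cons a s ha ih =>
      rw [Finset.sum_cons, Finset.sum_cons]
      exact le_trans (Nat.add_le_add_left ih _) (nat_div_add_le _ _ _)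

lemma card_dvd_Icc (N d : ℕ) (hd : 0 < d) :
    ((Finset.Icc 1 N).filter (fun x => d ∣ x)).card = N / d := by
  induction N with
  | zero => simp
  | succ n ih =>
      rw [show Finset.Icc 1 (n+1) = insert (n+1) (Finset.Icc 1 n) by
        rw [← Finset.Ico_insert_right (show (1:ℕ) ≤ n+1 by omega), Finset.Ico_add_one_right_eq_Icc]]
      rw [Finset.filter_insert, Nat.succ_div]
      split_ifs with h
      · rw [Finset.card_insert_of_notMem (by simp), ih]
      · rw [ih]; omega

lemma card_den_block (b c l d : ℕ) (hd : 0 < d) :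
    ((Finset.range b).filter (fun j => l ≤ c + j ∧ d ∣ b - j)).card
      = min b (c + b - l) / d := by
  rw [← card_dvd_Icc (min b (c + b - l)) d hd]
  apply Finset.card_nbij' (fun j => b - j) (fun x => b - x)
  · intro j hj
    simp only [Finset.mem_coe, Finset.mem_filter, Finset.mem_range] at hj
    simp only [Finset.mem_coe, Finset.mem_filter, Finset.mem_Icc]
    exact ⟨⟨by omega, by omega⟩, hj.2.2⟩
  · intro x hx
    simp only [Finset.mem_coe, Finset.mem_filter, Finset.mem_Icc] at hx
    simp only [Finset.mem_coe, Finset.mem_filter, Finset.mem_range]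
    refine ⟨by omega, by omega, ?_⟩
    rw [show b - (b - x) = x by omega]; exact hx.2
  · intro j hj
    simp only [Finset.mem_coe, Finset.mem_filter, Finset.mem_range] at hj
    beta_reduce
    omega
  · intro x hx
    simp only [Finset.mem_coe, Finset.mem_filter, Finset.mem_Icc] at hx
    beta_reduce
    omega

lemma card_num_ge (s k0 d m : ℕ) (hd : 0 < d) (hsm : s ≤ m) :
    (s - k0) / d ≤ ((Finset.range s).filter (fun j => k0 ≤ j ∧ d ∣ m - j)).card := by
  set S := (s - k0) / d with hS
  rcases Nat.eq_zero_or_pos S with h0 | h0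
  · omega
  have hks : k0 < s := by
    by_contra h
    have : s - k0 = 0 := by omega
    simp [hS, this] at h0
  set R := (m - k0) % d with hR
  set Q := (m - k0) / d with hQ
  have hQR : d * Q + R = m - k0 := Nat.div_add_mod _ _
  have hRd : R < d := Nat.mod_lt _ hd
  have hSd : S * d ≤ s - k0 := by rw [hS]; exact Nat.div_mul_le_self _ _
  have hSQ : S ≤ Q := by rw [hS, hQ]; exact Nat.div_le_div_right (by omega)
  calc S = (Finset.range S).card := (Finset.card_range S).symm
    _ ≤ _ := by
        apply Finset.card_le_card_of_injOn (fun i => k0 + R + i * d)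
        · intro i hi
          simp only [Finset.mem_coe, Finset.mem_range] at hi
          have hid : i * d + d ≤ S * d := by
            have := Nat.mul_le_mul_right d (show i + 1 ≤ S by omega)
            simpa [Nat.add_mul] using this
          have hiQ : i * d ≤ Q * d := Nat.mul_le_mul_right d (by omega)
          simp only [Finset.mem_coe, Finset.mem_filter, Finset.mem_range]
          refine ⟨by omega, by omega, ?_⟩
          have : m - (k0 + R + i * d) = d * Q - d * i := by
            have : d * i = i * d := Nat.mul_comm _ _
            omega
          rw [this]
          exact Nat.dvd_sub (Dvd.intro _ rfl) (Dvd.intro _ rfl)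
        · intro i hi j hj hij
          simp only [Set.mem_setOf_eq] at hij ⊢
          have : i * d = j * d := by omega
          exact Nat.eq_of_mul_eq_mul_right hd this


lemma exists_char (q p e r : ℕ) (hp : p.Prime) (he : 0 < e) (hq : q = p ^ e) (hr : 0 < r) :
    ∃ k0 d : ℕ, 0 < d ∧ ∀ k c : ℕ, k < c →
      (r ∣ q ^ c - q ^ k ↔ (k0 ≤ k ∧ d ∣ c - k)) := by
  have hq1 : 1 < q := by
    rw [hq]; calc 1 < p := hp.one_lt
    _ = p ^ 1 := (pow_one p).symm
    _ ≤ p ^ e := Nat.pow_le_pow_right hp.pos he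
  set a := r.factorization p with ha
  set r0 := r / p ^ a with hr0
  have hfac : p ^ a * r0 = r := Nat.ordProj_mul_ordCompl_eq_self r p
  have hr0pos : 0 < r0 := Nat.ordCompl_pos p hr.ne'
  have hcop : Nat.Coprime p r0 := Nat.coprime_ordCompl hp hr.ne'
  have hcopq : Nat.Coprime q r0 := by rw [hq]; exact hcop.pow_left e
  haveI : NeZero r0 := ⟨hr0pos.ne'⟩
  set u : (ZMod r0)ˣ := ZMod.unitOfCoprime q hcopq with hu
  set d := orderOf u with hd
  have hdpos : 0 < d := orderOf_pos u
  -- characterization of r0 ∣ q^t - 1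
  have hchar0 : ∀ t : ℕ, (r0 ∣ q ^ t - 1 ↔ d ∣ t) := by
    intro t
    have h1 : 1 ≤ q ^ t := Nat.one_le_pow _ _ (by omega)
    have e1 : ((1 : ℕ) : ZMod r0) = ((q ^ t : ℕ) : ZMod r0) ↔ r0 ∣ q ^ t - 1 := by
      rw [ZMod.natCast_eq_natCast_iff]; exact Nat.modEq_iff_dvd' h1
    have e2 : (u ^ t = 1) ↔ d ∣ t := by
      rw [hd]; exact (orderOf_dvd_iff_pow_eq_one).symm
    have e3 : (u ^ t = 1) ↔ ((1 : ℕ) : ZMod r0) = ((q ^ t : ℕ) : ZMod r0) := by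
      rw [Units.ext_iff, Units.val_pow_eq_pow_val, hu, ZMod.coe_unitOfCoprime, Units.val_one]
      push_cast
      exact eq_comm
    rw [← e1, ← e3, e2]
  -- k0
  refine ⟨if a = 0 then 0 else (a - 1) / e + 1, d, hdpos, ?_⟩
  intro k c hkc
  set t := c - k with ht
  have htpos : 0 < t := by omega
  have hsplit : q ^ c - q ^ k = q ^ k * (q ^ t - 1) := by
    have h1 : q ^ c = q ^ k * q ^ t := by rw [← pow_add]; congr 1; omega
    have h2 : 1 ≤ q ^ t := Nat.one_le_pow _ _ (by omega)
    rw [h1, Nat.mul_sub, Nat.mul_one]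
  have hcop2 : Nat.Coprime (p ^ a) (q ^ t - 1) := by
    apply Nat.Coprime.pow_left
    rw [hp.coprime_iff_not_dvd]
    intro hdvd
    have hpq : p ∣ q ^ t := by
      rw [hq, ← pow_mul]; exact dvd_pow_self p (by positivity)
    have : p ∣ 1 := by
      have h1 : 1 ≤ q ^ t := Nat.one_le_pow _ _ (by omega)
      have := Nat.dvd_sub hpq hdvd
      rwa [show q ^ t - (q ^ t - 1) = 1 by omega] at this
    exact absurd (Nat.le_of_dvd one_pos this) (by have := hp.one_lt; omega)
  have h1 : r ∣ q ^ k * (q ^ t - 1) ↔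
      (p ^ a ∣ q ^ k * (q ^ t - 1) ∧ r0 ∣ q ^ k * (q ^ t - 1)) := by
    constructor
    · intro h
      exact ⟨dvd_trans ⟨r0, hfac.symm⟩ h, dvd_trans ⟨p ^ a, by rw [Nat.mul_comm]; exact hfac.symm⟩ h⟩
    · rintro ⟨h4, h5⟩
      rw [← hfac]
      exact Nat.Coprime.mul_dvd_of_dvd_of_dvd (Nat.Coprime.pow_left a hcop) h4 h5
  have h2 : p ^ a ∣ q ^ k * (q ^ t - 1) ↔ p ^ a ∣ q ^ k :=
    ⟨fun h => Nat.Coprime.dvd_of_dvd_mul_right hcop2 h, fun h => h.mul_right _⟩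
  have h3 : r0 ∣ q ^ k * (q ^ t - 1) ↔ r0 ∣ q ^ t - 1 :=
    ⟨fun h => Nat.Coprime.dvd_of_dvd_mul_left ((hcopq.symm).pow_right k) h,
     fun h => h.mul_left _⟩
  have h4 : p ^ a ∣ q ^ k ↔ a ≤ e * k := by
    rw [hq, ← pow_mul]
    exact Nat.pow_dvd_pow_iff_le_right hp.one_lt
  have h5 : (a ≤ e * k) ↔ ((if a = 0 then 0 else (a - 1) / e + 1) ≤ k) := by
    split_ifs with h0
    · simp [h0]
    · have h6 : ((a - 1) / e < k) ↔ (a - 1 < k * e) := Nat.div_lt_iff_lt_mul he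
      have h7 : k * e = e * k := Nat.mul_comm _ _
      constructor
      · intro hk
        have : a - 1 < k * e := by omega
        have := h6.mpr this
        omega
      · intro hk
        have := h6.mp (by omega)
        omega
  rw [hsplit, h1, h2, h3, hchar0 t, h4, h5]


/-- The `(q,t)`-multinomial `[m; β, m−|β|]_{q,t}` as a power series in `ℚ[[t]]`
(for a weak composition `β` of length `ℓ`). -/
noncomputable def qtMult (q m ℓ : ℕ) (β : ℕ → ℕ) : PowerSeries ℚ :=
  (∏ j ∈ Finset.range (psum β ℓ),
      (1 - (PowerSeries.X : PowerSeries ℚ) ^ (q ^ m - q ^ j))) *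
    ∏ i ∈ Finset.range ℓ, ∏ j ∈ Finset.range (β i),
      (1 - (PowerSeries.X : PowerSeries ℚ) ^ (q ^ psum β (i + 1) - q ^ (psum β i + j)))⁻¹


lemma countP_eq_sum_map {α : Type*} (s : Multiset α) (p : α → Prop) [DecidablePred p] :
    (s.map (fun n => if p n then 1 else 0)).sum = s.countP p := by
  induction s using Multiset.induction_on with
  | empty => simp
  | cons a s ih => by_cases h : p a <;> simp [Multiset.countP_cons, h, ih] <;> omega

lemma prod_dvd (A B : Multiset ℕ) (hA : ∀ a ∈ A, 0 < a) (hB : ∀ b ∈ B, 0 < b)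
    (h : ∀ r, 0 < r → B.countP (r ∣ ·) ≤ A.countP (r ∣ ·)) :
    (B.map fun n => (Polynomial.X ^ n - 1 : Polynomial ℚ)).prod ∣
      (A.map fun n => (Polynomial.X ^ n - 1 : Polynomial ℚ)).prod := by
  classical
  have key : ∀ (M : Multiset ℕ) (hM : ∀ a ∈ M, 0 < a),
      (M.map fun n => (Polynomial.X ^ n - 1 : Polynomial ℚ)).prod
        = ((M.bind fun n => n.divisors.val).map (fun r => Polynomial.cyclotomic r ℚ)).prod := by
    intro M hM
    rw [Multiset.map_bind, Multiset.prod_bind]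
    apply congrArg
    rw [Multiset.map_congr rfl]
    intro n hn
    rw [← Polynomial.prod_cyclotomic_eq_X_pow_sub_one (hM n hn) ℚ]
    rfl
  rw [key A hA, key B hB]
  apply Multiset.prod_dvd_prod_of_le
  apply Multiset.map_le_map
  rw [Multiset.le_iff_count]
  intro r
  have hcount : ∀ (M : Multiset ℕ) (hM : ∀ a ∈ M, 0 < a),
      Multiset.count r (M.bind fun n => n.divisors.val) = M.countP (fun n => r ∣ n ∧ 0 < r) := by
    intro M hM
    rw [Multiset.count_bind, ← countP_eq_sum_map]
    congr 1
    apply Multiset.map_congr rfl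
    intro n hn
    by_cases hrn : r ∣ n ∧ 0 < r
    · rw [if_pos hrn]
      apply Multiset.count_eq_one_of_mem (Nat.divisors n).nodup
      rw [Finset.mem_val, Nat.mem_divisors]
      exact ⟨hrn.1, (hM n hn).ne'⟩
    · rw [if_neg hrn]
      apply Multiset.count_eq_zero_of_notMem
      rw [Finset.mem_val, Nat.mem_divisors]
      intro ⟨h1, h2⟩
      apply hrn
      refine ⟨h1, ?_⟩
      rcases Nat.eq_zero_or_pos r with h | h
      · subst h; exact absurd (zero_dvd_iff.mp h1) h2
      · exact h
  rw [hcount A hA, hcount B hB]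
  rcases Nat.eq_zero_or_pos r with hrz | hrpos
  · subst hrz
    have hz : ∀ (M : Multiset ℕ), M.countP (fun n => 0 ∣ n ∧ (0:ℕ) < 0) = 0 :=
      fun M => Multiset.countP_eq_zero.mpr (fun a ha => by simp)
    rw [hz A, hz B]
  · have e1 : B.countP (fun n => r ∣ n ∧ 0 < r) = B.countP (r ∣ ·) :=
      Multiset.countP_congr rfl (fun n _ => by simp [hrpos])
    have e2 : A.countP (fun n => r ∣ n ∧ 0 < r) = A.countP (r ∣ ·) :=
      Multiset.countP_congr rfl (fun n _ => by simp [hrpos])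
    rw [e1, e2]
    exact h r hrpos

lemma count_key (q p e m ℓ : ℕ) (hp : p.Prime) (he : 0 < e) (hq : q = p ^ e)
    (β : ℕ → ℕ) (hs : psum β ℓ ≤ m) (r : ℕ) (hr : 0 < r) :
    ∑ i ∈ Finset.range ℓ,
        ((Finset.range (β i)).filter
          (fun j => r ∣ q ^ psum β (i + 1) - q ^ (psum β i + j))).card
      ≤ ((Finset.range (psum β ℓ)).filter (fun j => r ∣ q ^ m - q ^ j)).card := by
  obtain ⟨k0, d, hd, hchar⟩ := exists_char q p e r hp he hq hr
  -- rewrite LHS blocks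
  have hL : ∀ i ∈ Finset.range ℓ,
      ((Finset.range (β i)).filter
        (fun j => r ∣ q ^ psum β (i + 1) - q ^ (psum β i + j))).card
      = min (β i) (psum β i + β i - k0) / d := by
    intro i _
    rw [← card_den_block (β i) (psum β i) k0 d hd]
    congr 1
    apply Finset.filter_congr
    intro j hj
    simp only [Finset.mem_range] at hj
    have hlt : psum β i + j < psum β (i + 1) := by
      rw [psum_succ]; omega
    rw [hchar _ _ hlt]
    have : psum β (i + 1) - (psum β i + j) = β i - j := by
      rw [psum_succ]; omega
    rw [this]
  rw [Finset.sum_congr rfl hL]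
  -- rewrite RHS
  have hR : ((Finset.range (psum β ℓ)).filter (fun j => r ∣ q ^ m - q ^ j))
      = ((Finset.range (psum β ℓ)).filter (fun j => k0 ≤ j ∧ d ∣ m - j)) := by
    apply Finset.filter_congr
    intro j hj
    simp only [Finset.mem_range] at hj
    exact hchar j m (by omega)
  rw [hR]
  calc ∑ i ∈ Finset.range ℓ, min (β i) (psum β i + β i - k0) / d
      ≤ (∑ i ∈ Finset.range ℓ, min (β i) (psum β i + β i - k0)) / d :=
        sum_div_le _ _ _
    _ ≤ (psum β ℓ - k0) / d := by
        apply Nat.div_le_div_right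
        have := sum_min_le β ℓ k0
        calc ∑ i ∈ Finset.range ℓ, min (β i) (psum β i + β i - k0)
            = ∑ i ∈ Finset.range ℓ, min (β i) (psum β (i+1) - k0) := by
              apply Finset.sum_congr rfl; intro i _; rw [psum_succ]
          _ ≤ _ := this
    _ ≤ _ := card_num_ge _ _ _ _ hd hs

lemma countP_bind {α γ : Type*} (v : Multiset α) (f : α → Multiset γ) (p : γ → Prop)
    [DecidablePred p] :
    (v.bind f).countP p = (v.map fun i => (f i).countP p).sum := by
  induction v using Multiset.induction_on with
  | empty => simp
  | cons a s ih => simp [Multiset.cons_bind, Multiset.countP_add, ih]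

lemma coe_prod' {ι : Type*} (s : Finset ι) (f : ι → Polynomial ℚ) :
    ((∏ i ∈ s, f i : Polynomial ℚ) : PowerSeries ℚ) = ∏ i ∈ s, ((f i : Polynomial ℚ) : PowerSeries ℚ) :=
  map_prod Polynomial.coeToPowerSeries.ringHom f s

lemma qtMult_eq (q p e m ℓ : ℕ) (hp : p.Prime) (he : 0 < e) (hq : q = p ^ e)
    (β : ℕ → ℕ) (hs : psum β ℓ ≤ m) :
    ∃ Qp : Polynomial ℚ, qtMult q m ℓ β = ↑Qp ∧
      Qp.natDegree +
          ∑ i ∈ Finset.range ℓ, ∑ j ∈ Finset.range (β i),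
            (q ^ psum β (i + 1) - q ^ (psum β i + j))
        = ∑ j ∈ Finset.range (psum β ℓ), (q ^ m - q ^ j) := by
  classical
  have hq1 : 1 < q := by
    rw [hq]
    calc 1 < p := hp.one_lt
    _ = p ^ 1 := (pow_one p).symm
    _ ≤ p ^ e := Nat.pow_le_pow_right hp.pos he
  have hapos : ∀ j ∈ Finset.range (psum β ℓ), 0 < q ^ m - q ^ j := by
    intro j hj; simp only [Finset.mem_range] at hj
    have : q ^ j < q ^ m := Nat.pow_lt_pow_right hq1 (by omega)
    omega
  have hbpos : ∀ i ∈ Finset.range ℓ, ∀ j ∈ Finset.range (β i),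
      0 < q ^ psum β (i + 1) - q ^ (psum β i + j) := by
    intro i hi j hj; simp only [Finset.mem_range] at hj
    have : q ^ (psum β i + j) < q ^ (psum β (i + 1)) := by
      apply Nat.pow_lt_pow_right hq1
      rw [psum_succ]; omega
    omega
  -- multisets
  set A : Multiset ℕ := (Finset.range (psum β ℓ)).val.map (fun j => q ^ m - q ^ j) with hA
  set B : Multiset ℕ := (Finset.range ℓ).val.bind
    (fun i => (Finset.range (β i)).val.map
      (fun j => q ^ psum β (i + 1) - q ^ (psum β i + j))) with hB
  have hApos : ∀ a ∈ A, 0 < a := by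
    intro a ha; rw [hA, Multiset.mem_map] at ha
    obtain ⟨j, hj, rfl⟩ := ha
    exact hapos j (by rwa [← Finset.mem_val])
  have hBpos : ∀ b ∈ B, 0 < b := by
    intro b hb; rw [hB, Multiset.mem_bind] at hb
    obtain ⟨i, hi, hb⟩ := hb
    rw [Multiset.mem_map] at hb
    obtain ⟨j, hj, rfl⟩ := hb
    exact hbpos i (by rwa [← Finset.mem_val]) j (by rwa [← Finset.mem_val])
  have hcnt : ∀ r, 0 < r → B.countP (r ∣ ·) ≤ A.countP (r ∣ ·) := by
    intro r hr
    have hA' : A.countP (r ∣ ·)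
        = ((Finset.range (psum β ℓ)).filter (fun j => r ∣ q ^ m - q ^ j)).card := by
      rw [hA, Multiset.countP_map]; rfl
    have hB' : B.countP (r ∣ ·)
        = ∑ i ∈ Finset.range ℓ, ((Finset.range (β i)).filter
            (fun j => r ∣ q ^ psum β (i + 1) - q ^ (psum β i + j))).card := by
      rw [hB, countP_bind, Finset.sum_eq_multiset_sum]
      apply congrArg Multiset.sum
      apply Multiset.map_congr rfl
      intro i hi
      rw [Multiset.countP_map]; rfl
    rw [hA', hB']
    exact count_key q p e m ℓ hp he hq β hs r hr
  have hdvd := prod_dvd A B hApos hBpos hcnt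
  -- rewrite products as Finset products
  have hPAm : (A.map fun n => (Polynomial.X ^ n - 1 : Polynomial ℚ)).prod
      = ∏ j ∈ Finset.range (psum β ℓ), (Polynomial.X ^ (q ^ m - q ^ j) - 1 : Polynomial ℚ) := by
    rw [hA, Multiset.map_map, Finset.prod_eq_multiset_prod]; rfl
  have hPBm : (B.map fun n => (Polynomial.X ^ n - 1 : Polynomial ℚ)).prod
      = ∏ i ∈ Finset.range ℓ, ∏ j ∈ Finset.range (β i),
          (Polynomial.X ^ (q ^ psum β (i + 1) - q ^ (psum β i + j)) - 1 : Polynomial ℚ) := by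
    rw [hB, Multiset.map_bind, Multiset.prod_bind, Finset.prod_eq_multiset_prod]
    apply congrArg Multiset.prod
    apply Multiset.map_congr rfl
    intro i hi
    rw [Multiset.map_map, Finset.prod_eq_multiset_prod]; rfl
  rw [hPAm, hPBm] at hdvd
  obtain ⟨Qp, hQp⟩ := hdvd
  -- monicity and degrees
  have hmg : ∀ n : ℕ, 0 < n → (Polynomial.X ^ n - 1 : Polynomial ℚ).Monic := by
    intro n hn
    have := Polynomial.monic_X_pow_sub_C (1 : ℚ) hn.ne'
    rwa [Polynomial.C_1] at this
  have hdeg : ∀ n : ℕ, (Polynomial.X ^ n - 1 : Polynomial ℚ).natDegree = n := by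
    intro n
    have := Polynomial.natDegree_X_pow_sub_C (R := ℚ) (n := n) (r := 1)
    rwa [Polynomial.C_1] at this
  have hPBmonic : (∏ i ∈ Finset.range ℓ, ∏ j ∈ Finset.range (β i),
      (Polynomial.X ^ (q ^ psum β (i + 1) - q ^ (psum β i + j)) - 1 : Polynomial ℚ)).Monic :=
    Polynomial.monic_prod_of_monic _ _ (fun i hi =>
      Polynomial.monic_prod_of_monic _ _ (fun j hj => hmg _ (hbpos i hi j hj)))
  have hPAmonic : (∏ j ∈ Finset.range (psum β ℓ),
      (Polynomial.X ^ (q ^ m - q ^ j) - 1 : Polynomial ℚ)).Monic :=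
    Polynomial.monic_prod_of_monic _ _ (fun j hj => hmg _ (hapos j hj))
  have hQ0 : Qp ≠ 0 := by
    rintro rfl
    rw [mul_zero] at hQp
    exact hPAmonic.ne_zero hQp
  have hdA : (∏ j ∈ Finset.range (psum β ℓ),
      (Polynomial.X ^ (q ^ m - q ^ j) - 1 : Polynomial ℚ)).natDegree
      = ∑ j ∈ Finset.range (psum β ℓ), (q ^ m - q ^ j) := by
    rw [Polynomial.natDegree_prod _ _ (fun j hj => (hmg _ (hapos j hj)).ne_zero)]
    exact Finset.sum_congr rfl (fun j _ => hdeg _)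
  have hdB : (∏ i ∈ Finset.range ℓ, ∏ j ∈ Finset.range (β i),
      (Polynomial.X ^ (q ^ psum β (i + 1) - q ^ (psum β i + j)) - 1 : Polynomial ℚ)).natDegree
      = ∑ i ∈ Finset.range ℓ, ∑ j ∈ Finset.range (β i),
          (q ^ psum β (i + 1) - q ^ (psum β i + j)) := by
    rw [Polynomial.natDegree_prod _ _ (fun i hi =>
      (Polynomial.monic_prod_of_monic _ _
        (fun j hj => hmg _ (hbpos i hi j hj))).ne_zero)]
    apply Finset.sum_congr rfl
    intro i hi
    rw [Polynomial.natDegree_prod _ _ (fun j hj => (hmg _ (hbpos i hi j hj)).ne_zero)]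
    exact Finset.sum_congr rfl (fun j _ => hdeg _)
  have hdd : (∏ j ∈ Finset.range (psum β ℓ),
      (Polynomial.X ^ (q ^ m - q ^ j) - 1 : Polynomial ℚ)).natDegree
      = (∏ i ∈ Finset.range ℓ, ∏ j ∈ Finset.range (β i),
          (Polynomial.X ^ (q ^ psum β (i + 1) - q ^ (psum β i + j)) - 1 : Polynomial ℚ)).natDegree
        + Qp.natDegree := by
    rw [hQp, Polynomial.natDegree_mul hPBmonic.ne_zero hQ0]
  refine ⟨Qp, ?_, by omega⟩
  -- power series identity
  have hcoe : ∀ n : ℕ, (((Polynomial.X ^ n - 1 : Polynomial ℚ)) : PowerSeries ℚ)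
      = (-1) * (1 - PowerSeries.X ^ n) := by
    intro n
    rw [Polynomial.coe_sub, Polynomial.coe_pow, Polynomial.coe_X, Polynomial.coe_one]
    ring
  have hQps : ((∏ j ∈ Finset.range (psum β ℓ),
        (Polynomial.X ^ (q ^ m - q ^ j) - 1 : Polynomial ℚ) : Polynomial ℚ) : PowerSeries ℚ)
      = ((∏ i ∈ Finset.range ℓ, ∏ j ∈ Finset.range (β i),
          (Polynomial.X ^ (q ^ psum β (i + 1) - q ^ (psum β i + j)) - 1 : Polynomial ℚ)
            : Polynomial ℚ) : PowerSeries ℚ) * (Qp : PowerSeries ℚ) := by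
    rw [hQp, Polynomial.coe_mul]
  rw [coe_prod', coe_prod'] at hQps
  have hc1 : ∀ j ∈ Finset.range (psum β ℓ),
      (((Polynomial.X ^ (q ^ m - q ^ j) - 1 : Polynomial ℚ)) : PowerSeries ℚ)
        = (-1) * (1 - PowerSeries.X ^ (q ^ m - q ^ j)) := fun j _ => hcoe _
  rw [Finset.prod_congr rfl hc1, Finset.prod_mul_distrib, Finset.prod_const,
    Finset.card_range] at hQps
  have hc2 : ∀ i ∈ Finset.range ℓ,
      ((∏ j ∈ Finset.range (β i),
            (Polynomial.X ^ (q ^ psum β (i + 1) - q ^ (psum β i + j)) - 1 : Polynomial ℚ)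
          : Polynomial ℚ) : PowerSeries ℚ)
        = (-1) ^ (β i) * ∏ j ∈ Finset.range (β i),
            (1 - PowerSeries.X ^ (q ^ psum β (i + 1) - q ^ (psum β i + j))) := by
    intro i _
    rw [coe_prod']
    have : ∀ j ∈ Finset.range (β i),
        (((Polynomial.X ^ (q ^ psum β (i + 1) - q ^ (psum β i + j)) - 1 : Polynomial ℚ))
          : PowerSeries ℚ)
        = (-1) * (1 - PowerSeries.X ^ (q ^ psum β (i + 1) - q ^ (psum β i + j))) :=
      fun j _ => hcoe _
    rw [Finset.prod_congr rfl this, Finset.prod_mul_distrib, Finset.prod_const,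
      Finset.card_range]
  rw [Finset.prod_congr rfl hc2, Finset.prod_mul_distrib, Finset.prod_pow_eq_pow_sum] at hQps
  have hsum : ∑ i ∈ Finset.range ℓ, β i = psum β ℓ := rfl
  rw [hsum] at hQps
  -- cancel the signs
  have hNA : (∏ j ∈ Finset.range (psum β ℓ),
        (1 - (PowerSeries.X : PowerSeries ℚ) ^ (q ^ m - q ^ j)))
      = (∏ i ∈ Finset.range ℓ, ∏ j ∈ Finset.range (β i),
          (1 - (PowerSeries.X : PowerSeries ℚ) ^ (q ^ psum β (i + 1) - q ^ (psum β i + j))))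
        * (Qp : PowerSeries ℚ) := by
    have hne : ((-1 : PowerSeries ℚ) ^ psum β ℓ) ≠ 0 := by
      apply pow_ne_zero
      intro h
      have := congrArg (PowerSeries.constantCoeff) h
      simp at this
    apply mul_left_cancel₀ hne
    rw [hQps]; ring
  -- final assembly
  show (∏ j ∈ Finset.range (psum β ℓ),
      (1 - (PowerSeries.X : PowerSeries ℚ) ^ (q ^ m - q ^ j))) *
    (∏ i ∈ Finset.range ℓ, ∏ j ∈ Finset.range (β i),
      (1 - (PowerSeries.X : PowerSeries ℚ)
        ^ (q ^ psum β (i + 1) - q ^ (psum β i + j)))⁻¹) = (Qp : PowerSeries ℚ)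
  rw [hNA]
  have hcancel : (∏ i ∈ Finset.range ℓ, ∏ j ∈ Finset.range (β i),
        (1 - (PowerSeries.X : PowerSeries ℚ) ^ (q ^ psum β (i + 1) - q ^ (psum β i + j))))
      * (∏ i ∈ Finset.range ℓ, ∏ j ∈ Finset.range (β i),
        (1 - (PowerSeries.X : PowerSeries ℚ) ^ (q ^ psum β (i + 1) - q ^ (psum β i + j)))⁻¹)
      = 1 := by
    rw [← Finset.prod_mul_distrib]
    apply Finset.prod_eq_one
    intro i hi
    rw [← Finset.prod_mul_distrib]
    apply Finset.prod_eq_one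
    intro j hj
    apply PowerSeries.mul_inv_cancel
    have hb := hbpos i hi j hj
    simp [map_sub, map_pow, zero_pow (by omega : (q ^ psum β (i+1) - q ^ (psum β i + j)) ≠ 0)]
  calc (∏ i ∈ Finset.range ℓ, ∏ j ∈ Finset.range (β i),
        (1 - (PowerSeries.X : PowerSeries ℚ) ^ (q ^ psum β (i + 1) - q ^ (psum β i + j))))
      * (Qp : PowerSeries ℚ)
      * (∏ i ∈ Finset.range ℓ, ∏ j ∈ Finset.range (β i),
        (1 - (PowerSeries.X : PowerSeries ℚ) ^ (q ^ psum β (i + 1) - q ^ (psum β i + j)))⁻¹)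
      = (Qp : PowerSeries ℚ) * ((∏ i ∈ Finset.range ℓ, ∏ j ∈ Finset.range (β i),
        (1 - (PowerSeries.X : PowerSeries ℚ) ^ (q ^ psum β (i + 1) - q ^ (psum β i + j))))
      * (∏ i ∈ Finset.range ℓ, ∏ j ∈ Finset.range (β i),
        (1 - (PowerSeries.X : PowerSeries ℚ) ^ (q ^ psum β (i + 1) - q ^ (psum β i + j)))⁻¹)) := by
        ring
    _ = (Qp : PowerSeries ℚ) := by rw [hcancel, mul_one]


/-- The exponent `e(m,α,β) = Σᵢ (αᵢ − βᵢ)(q^m − q^{Bᵢ})`. -/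
def eexp (q m ℓ : ℕ) (α β : ℕ → ℕ) : ℕ :=
  ∑ i ∈ Finset.range ℓ, (α i - β i) * (q ^ m - q ^ psum β (i + 1))

/-- Extend a tuple `β : Fin ℓ → ℕ` to a function `ℕ → ℕ` by zero. -/
def extfn (ℓ : ℕ) (β : Fin ℓ → ℕ) : ℕ → ℕ := fun i => if h : i < ℓ then β ⟨i, h⟩ else 0

/-- `C_{α,m}(t) = Σ_{β ≤ α, |β| ≤ m} t^{e(m,α,β)} [m; β, m−|β|]_{q,t}`. -/
noncomputable def Cser (q m ℓ : ℕ) (α : ℕ → ℕ) : PowerSeries ℚ :=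
  ∑ β ∈ (Finset.Icc (0 : Fin ℓ → ℕ) fun i => α i).filter fun β => ∑ i, β i ≤ m,
    (PowerSeries.X : PowerSeries ℚ) ^ eexp q m ℓ α (extfn ℓ β) * qtMult q m ℓ (extfn ℓ β)

lemma sum_blocks (f : ℕ → ℕ) (β : ℕ → ℕ) (ℓ : ℕ) :
    ∑ j ∈ Finset.range (psum β ℓ), f j
      = ∑ i ∈ Finset.range ℓ, ∑ j ∈ Finset.range (β i), f (psum β i + j) := by
  induction ℓ with
  | zero => simp [psum]
  | succ L ih => rw [Finset.sum_range_succ, ← ih, psum_succ, Finset.sum_range_add]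

lemma deg_identity (q m ℓ : ℕ) (hq1 : 1 < q) (α β : ℕ → ℕ)
    (hβ : ∀ i < ℓ, β i ≤ α i) (hs : psum β ℓ ≤ m) :
    eexp q m ℓ α β + ∑ j ∈ Finset.range (psum β ℓ), (q ^ m - q ^ j)
      = (∑ i ∈ Finset.range ℓ, α i * (q ^ m - q ^ psum β (i + 1)))
        + ∑ i ∈ Finset.range ℓ, ∑ j ∈ Finset.range (β i),
            (q ^ psum β (i + 1) - q ^ (psum β i + j)) := by
  rw [sum_blocks (fun j => q ^ m - q ^ j) β ℓ]
  unfold eexp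
  rw [← Finset.sum_add_distrib, ← Finset.sum_add_distrib]
  apply Finset.sum_congr rfl
  intro i hi
  simp only [Finset.mem_range] at hi
  have hm : psum β (i + 1) ≤ m := le_trans (psum_mono β (by omega)) hs
  have hC : q ^ psum β (i + 1) ≤ q ^ m := Nat.pow_le_pow_right (by omega) hm
  have split : ∀ j ∈ Finset.range (β i),
      (q ^ m - q ^ (psum β i + j))
        = (q ^ m - q ^ psum β (i + 1)) + (q ^ psum β (i + 1) - q ^ (psum β i + j)) := by
    intro j hj
    simp only [Finset.mem_range] at hj
    have hcj : q ^ (psum β i + j) ≤ q ^ psum β (i + 1) := by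
      apply Nat.pow_le_pow_right (by omega)
      rw [psum_succ]; omega
    omega
  rw [Finset.sum_congr rfl split, Finset.sum_add_distrib, Finset.sum_const,
    Finset.card_range, smul_eq_mul]
  have hab := hβ i hi
  have hmul : (α i - β i) * (q ^ m - q ^ psum β (i + 1))
      + β i * (q ^ m - q ^ psum β (i + 1)) = α i * (q ^ m - q ^ psum β (i + 1)) := by
    rw [← Nat.add_mul]
    congr 1
    omega
  omega

lemma term_coeff (q p e m ℓ d : ℕ) (hp : p.Prime) (he : 0 < e) (hq : q = p ^ e)
    (α β : ℕ → ℕ) (hβ : ∀ i < ℓ, β i ≤ α i) (hs : psum β ℓ ≤ m)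
    (hd : ∑ i ∈ Finset.range ℓ, α i * (q ^ m - q ^ psum β (i + 1)) < d) :
    PowerSeries.coeff d
      ((PowerSeries.X : PowerSeries ℚ) ^ eexp q m ℓ α β * qtMult q m ℓ β) = 0 := by
  have hq1 : 1 < q := by
    rw [hq]
    calc 1 < p := hp.one_lt
    _ = p ^ 1 := (pow_one p).symm
    _ ≤ p ^ e := Nat.pow_le_pow_right hp.pos he
  obtain ⟨Qp, hQ, hdeg⟩ := qtMult_eq q p e m ℓ hp he hq β hs
  have hdi := deg_identity q m ℓ hq1 α β hβ hs
  have hE : eexp q m ℓ α β + Qp.natDegree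
      = ∑ i ∈ Finset.range ℓ, α i * (q ^ m - q ^ psum β (i + 1)) := by omega
  rw [hQ]
  rw [show d = (d - eexp q m ℓ α β) + eexp q m ℓ α β by omega]
  rw [PowerSeries.coeff_X_pow_mul, Polynomial.coeff_coe]
  apply Polynomial.coeff_eq_zero_of_natDegree_lt
  omega

lemma psum_extfn {ℓ : ℕ} (β : Fin ℓ → ℕ) (k : ℕ) (hk : k ≤ ℓ) :
    psum (extfn ℓ β) k = ∑ i ∈ Finset.range k, extfn ℓ β i := rfl

lemma psum_extfn_top {ℓ : ℕ} (β : Fin ℓ → ℕ) : psum (extfn ℓ β) ℓ = ∑ i, β i := by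
  rw [psum, ← Fin.sum_univ_eq_sum_range (fun j => extfn ℓ β j) ℓ]
  apply Finset.sum_congr rfl
  intro i _
  simp [extfn]

/-- Proposition: for a prime power `q`, any `m ≥ 0` and any composition `α` of `n`, the power
series `C_{α,m}(t)` is a monic polynomial of degree `n(q^m − 1)`: its coefficient of
`t^{n(q^m−1)}` is `1` and all coefficients in higher degrees vanish. -/
theorem statement3 (q m ℓ n : ℕ) (hq : IsPrimePow q) (α : ℕ → ℕ)
    (hpos : ∀ i < ℓ, 0 < α i) (hsum : ∑ i ∈ Finset.range ℓ, α i = n) :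
    PowerSeries.coeff (n * (q ^ m - 1)) (Cser q m ℓ α) = 1 ∧
    ∀ d, n * (q ^ m - 1) < d → PowerSeries.coeff d (Cser q m ℓ α) = 0 := by
  classical
  obtain ⟨p, e, hpp, he, hpe⟩ := hq
  have hp : p.Prime := Nat.prime_iff.mpr hpp
  have hqe : q = p ^ e := hpe.symm
  have hq1 : 1 < q := by
    rw [hqe]
    calc 1 < p := hp.one_lt
    _ = p ^ 1 := (pow_one p).symm
    _ ≤ p ^ e := Nat.pow_le_pow_right hp.pos he
  set S := (Finset.Icc (0 : Fin ℓ → ℕ) fun i => α i).filter (fun β => ∑ i, β i ≤ m) with hS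
  -- facts about members of S
  have hmem : ∀ β ∈ S, (∀ i < ℓ, extfn ℓ β i ≤ α i) ∧ psum (extfn ℓ β) ℓ ≤ m := by
    intro β hβ
    rw [hS, Finset.mem_filter, Finset.mem_Icc] at hβ
    obtain ⟨⟨h0, h1⟩, h2⟩ := hβ
    constructor
    · intro i hi
      have := h1 ⟨i, hi⟩
      simpa [extfn, dif_pos hi] using this
    · rw [psum_extfn_top]; exact h2
  -- bound on the top-degree quantity
  have hTle : ∀ β ∈ S,
      ∑ i ∈ Finset.range ℓ, α i * (q ^ m - q ^ psum (extfn ℓ β) (i + 1))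
        ≤ n * (q ^ m - 1) := by
    intro β hβ
    rw [← hsum, Finset.sum_mul]
    apply Finset.sum_le_sum
    intro i _
    apply Nat.mul_le_mul_left
    have h1 : 1 ≤ q ^ psum (extfn ℓ β) (i + 1) := Nat.one_le_pow _ _ (by omega)
    omega
  have hTlt : ∀ β ∈ S, β ≠ 0 →
      ∑ i ∈ Finset.range ℓ, α i * (q ^ m - q ^ psum (extfn ℓ β) (i + 1))
        < n * (q ^ m - 1) := by
    intro β hβ hne
    obtain ⟨k, hk⟩ := Function.ne_iff.mp hne
    have hk0 : 0 < β k := Nat.pos_of_ne_zero (by simpa using hk)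
    have hmem' := hmem β hβ
    rw [← hsum, Finset.sum_mul]
    apply Finset.sum_lt_sum
    · intro i _
      apply Nat.mul_le_mul_left
      have h1 : 1 ≤ q ^ psum (extfn ℓ β) (i + 1) := Nat.one_le_pow _ _ (by omega)
      omega
    · refine ⟨k.val, Finset.mem_range.mpr k.isLt, ?_⟩
      apply mul_lt_mul_of_pos_left ?_ (hpos k.val k.isLt)
      have hBk : 1 ≤ psum (extfn ℓ β) (k.val + 1) := by
        rw [psum_succ]
        have : extfn ℓ β k.val = β k := by simp [extfn, k.isLt]
        omega
      have hBm : psum (extfn ℓ β) (k.val + 1) ≤ m :=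
        le_trans (psum_mono _ k.isLt) hmem'.2
      have h2 : q ^ 1 ≤ q ^ psum (extfn ℓ β) (k.val + 1) :=
        Nat.pow_le_pow_right (by omega) hBk
      have h3 : q ^ psum (extfn ℓ β) (k.val + 1) ≤ q ^ m :=
        Nat.pow_le_pow_right (by omega) hBm
      have h4 : (1:ℕ) ≤ q ^ m := Nat.one_le_pow _ _ (by omega)
      rw [pow_one] at h2
      omega
  constructor
  · -- top coefficient is 1
    rw [Cser, ← hS, map_sum]
    have h0mem : (0 : Fin ℓ → ℕ) ∈ S := by
      rw [hS, Finset.mem_filter, Finset.mem_Icc]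
      exact ⟨⟨le_refl _, fun i => Nat.zero_le _⟩, by simp⟩
    rw [Finset.sum_eq_single_of_mem (0 : Fin ℓ → ℕ) h0mem ?_]
    · -- the β = 0 term
      have hext0 : extfn ℓ (0 : Fin ℓ → ℕ) = fun _ => 0 := by
        funext i
        unfold extfn
        split <;> rfl
      rw [hext0]
      have hqt1 : qtMult q m ℓ (fun _ => 0) = 1 := by
        unfold qtMult
        simp [psum]
      have hee : eexp q m ℓ α (fun _ => 0) = n * (q ^ m - 1) := by
        unfold eexp
        rw [← hsum, Finset.sum_mul]
        apply Finset.sum_congr rfl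
        intro i _
        simp [psum]
      rw [hqt1, mul_one, hee]
      rw [PowerSeries.coeff_X_pow]
      simp
    · -- all other terms vanish in degree n(q^m − 1)
      intro b hb hbne
      have h := hmem b hb
      exact term_coeff q p e m ℓ (n * (q ^ m - 1)) hp he hqe α (extfn ℓ b)
        h.1 h.2 (hTlt b hb hbne)
  · -- higher coefficients vanish
    intro d hd
    rw [Cser, ← hS, map_sum]
    apply Finset.sum_eq_zero
    intro b hb
    have h := hmem b hb
    exact term_coeff q p e m ℓ d hp he hqe α (extfn ℓ b)
      h.1 h.2 (lt_of_le_of_lt (hTle b hb) hd)
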